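/- The estimator ℓ̂ defined by ℓ̂_i = [𝟙(ỹ=y)/p_ỹ]·𝟙(y≠i)·𝟙(ŷ≠i) + [𝟙(ỹ=ŷ)/p_ỹ]·𝟙(ŷ≠y)·𝟙(ŷ=i) is an unbiased estimator of the zero-one loss vector: for each coordinate i, E_{ỹ∼p}[ℓ̂_i] = 𝟙(y≠i). -/
import Mathlib


/-- The estimator ℓ̂ from (4) is an unbiased estimator of the zero-one loss vector. -/
theorem stmt_0 (k : ℕ) (hk : 2 ≤ k) (y yhat : Fin k) (p : Fin k → ℝ)
    (hp : ∀ j, 0 < p j) (hsum : ∑ j, p j = 1) (i : Fin k) :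
    ∑ ytil : Fin k, p ytil *
      ((if ytil = y then 1 / p ytil else 0) * (if y ≠ i then 1 else 0) *
          (if yhat ≠ i then 1 else 0) +
        (if ytil = yhat then 1 / p ytil else 0) * (if yhat ≠ y then 1 else 0) *
          (if yhat = i then 1 else 0)) = (if y ≠ i then 1 else 0) := by
  have key : ∀ j : Fin k, p j *
      ((if j = y then 1 / p j else 0) * (if y ≠ i then 1 else 0) *
          (if yhat ≠ i then 1 else 0) +
        (if j = yhat then 1 / p j else 0) * (if yhat ≠ y then 1 else 0) *
          (if yhat = i then 1 else 0)) =
      (if j = y then (if y ≠ i then 1 else 0) * (if yhat ≠ i then 1 else 0) else 0) +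
      (if j = yhat then (if yhat ≠ y then 1 else 0) * (if yhat = i then 1 else 0) else 0) := by
    intro j
    have hj := (hp j).ne'
    by_cases h1 : j = y <;> by_cases h2 : j = yhat <;>
      simp [h1, h2, mul_add, mul_inv_cancel₀ (hp y).ne', mul_inv_cancel₀ (hp yhat).ne'] <;> split_ifs <;> first | rfl | tauto
  rw [Finset.sum_congr rfl (fun j _ => key j), Finset.sum_add_distrib]
  simp only [Finset.sum_ite_eq', Finset.mem_univ, if_true]
  by_cases h : yhat = i
  · by_cases hy : y = i <;> simp [h, hy] <;> subst h <;> simp [Ne.symm, hy] <;> tauto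
  · by_cases hy : y = i <;> simp [h, hy]
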